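/- If player i selects actions in information set I according to regret matching for T iterations, then the average immediate counterfactual regret at I satisfies R_{i,imm}^T(I) ≤ Δ_I √|A(I)| / √T, where Δ_I is the range of player i's utilities over leaves reachable from I. -/

import Mathlib

/-!
STATEMENT 2 (Blackwell-style regret-matching bound at a single information set `I`).
`Acts` is the action set `A(I)`, `v t a` is the counterfactual value
`v_i(b^t_{I→a}, I)` of playing `a` at iteration `t` (so the counterfactual value of
`b^t` itself is `∑ a', b t a' * v t a'`), `R t a` is the cumulative counterfactual
regret `R_i^t(I,a)`, and `b` is produced by regret matching.  The per-iteration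
regret increments are bounded in absolute value by `Δ = Δ_I`.  Conclusion: the
average immediate counterfactual regret `R_{i,imm}^T(I) = (1/T) max_a R_i^T(I,a)`
is at most `Δ_I √|A(I)| / √T`. -/
theorem stmt2 {A : Type*} (Acts : Finset A) (hA : Acts.Nonempty)
    (Δ : ℝ) (hΔ : 0 ≤ Δ)
    (T : ℕ) (hT : 0 < T)
    (v : ℕ → A → ℝ)
    (b : ℕ → A → ℝ) (R : ℕ → A → ℝ)
    (hR0 : ∀ a, R 0 a = 0)
    (hRsucc : ∀ t a, a ∈ Acts →
      R (t + 1) a = R t a + (v t a - ∑ a' ∈ Acts, b t a' * v t a'))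
    (hrm : ∀ t a, a ∈ Acts → b t a =
      if 0 < ∑ a' ∈ Acts, max 0 (R t a')
      then max 0 (R t a) / ∑ a' ∈ Acts, max 0 (R t a')
      else 1 / (Acts.card : ℝ))
    (hv : ∀ t a, a ∈ Acts → |v t a - ∑ a' ∈ Acts, b t a' * v t a'| ≤ Δ) :
    (1 / (T : ℝ)) * ((Acts.sup' hA fun a => R T a))
      ≤ Δ * Real.sqrt (Acts.card) / Real.sqrt T := by
  set r : ℕ → A → ℝ := fun t a => v t a - ∑ a' ∈ Acts, b t a' * v t a' with hrdef
  -- cross term is zero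
  have hcross : ∀ t, ∑ a ∈ Acts, max 0 (R t a) * r t a = 0 := by
    intro t
    by_cases hS : 0 < ∑ a' ∈ Acts, max 0 (R t a')
    · have hc : ∑ a' ∈ Acts, b t a' * v t a'
          = (∑ a ∈ Acts, max 0 (R t a) * v t a) / (∑ a' ∈ Acts, max 0 (R t a')) := by
        rw [Finset.sum_div]
        refine Finset.sum_congr rfl fun a ha => ?_
        rw [hrm t a ha, if_pos hS, div_mul_eq_mul_div]
      have hSne : (∑ a' ∈ Acts, max 0 (R t a')) ≠ 0 := ne_of_gt hS
      simp only [hrdef, mul_sub]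
      rw [Finset.sum_sub_distrib, hc, ← Finset.sum_mul]
      field_simp; ring
    · have hS0 : ∑ a' ∈ Acts, max 0 (R t a') = 0 :=
        le_antisymm (not_lt.mp hS) (Finset.sum_nonneg fun a _ => le_max_left _ _)
      have hz : ∀ a ∈ Acts, max 0 (R t a) = 0 :=
        (Finset.sum_eq_zero_iff_of_nonneg (fun a _ => le_max_left 0 (R t a))).mp hS0
      exact Finset.sum_eq_zero fun a ha => by rw [hz a ha, zero_mul]
  -- potential bound
  have hΦ : ∀ t : ℕ, ∑ a ∈ Acts, (max 0 (R t a))^2 ≤ t * ((Acts.card : ℝ) * Δ^2) := by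
    intro t
    induction t with
    | zero => simp [hR0]
    | succ n ih =>
      have hstep : ∀ a ∈ Acts, (max 0 (R (n+1) a))^2 ≤ (max 0 (R n a) + r n a)^2 := by
        intro a ha
        have h1 : max 0 (R (n+1) a) ≤ |max 0 (R n a) + r n a| := by
          rw [hRsucc n a ha]
          refine max_le (abs_nonneg _) ?_
          calc R n a + (v n a - ∑ a' ∈ Acts, b n a' * v n a')
              ≤ max 0 (R n a) + r n a := by
                simp only [hrdef]; gcongr; exact le_max_right _ _
            _ ≤ |max 0 (R n a) + r n a| := le_abs_self _
        calc (max 0 (R (n+1) a))^2 ≤ |max 0 (R n a) + r n a|^2 :=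
              pow_le_pow_left₀ (le_max_left _ _) h1 2
          _ = (max 0 (R n a) + r n a)^2 := sq_abs _
      have hr2 : ∑ a ∈ Acts, (r n a)^2 ≤ (Acts.card : ℝ) * Δ^2 := by
        calc ∑ a ∈ Acts, (r n a)^2 ≤ ∑ _a ∈ Acts, Δ^2 := by
              refine Finset.sum_le_sum fun a ha => ?_
              have := hv n a ha
              calc (r n a)^2 = |r n a|^2 := (sq_abs _).symm
                _ ≤ Δ^2 := pow_le_pow_left₀ (abs_nonneg _) this 2
          _ = (Acts.card : ℝ) * Δ^2 := by rw [Finset.sum_const, nsmul_eq_mul]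
      calc ∑ a ∈ Acts, (max 0 (R (n+1) a))^2
          ≤ ∑ a ∈ Acts, (max 0 (R n a) + r n a)^2 := Finset.sum_le_sum hstep
        _ = ∑ a ∈ Acts, ((max 0 (R n a))^2 + 2 * (max 0 (R n a) * r n a) + (r n a)^2) := by
              refine Finset.sum_congr rfl fun a _ => ?_; ring
        _ = (∑ a ∈ Acts, (max 0 (R n a))^2) + 2 * (∑ a ∈ Acts, max 0 (R n a) * r n a)
              + ∑ a ∈ Acts, (r n a)^2 := by
              rw [Finset.sum_add_distrib, Finset.sum_add_distrib, Finset.mul_sum]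
        _ = (∑ a ∈ Acts, (max 0 (R n a))^2) + ∑ a ∈ Acts, (r n a)^2 := by
              rw [hcross n]; ring
        _ ≤ n * ((Acts.card : ℝ) * Δ^2) + (Acts.card : ℝ) * Δ^2 := by gcongr
        _ = (n + 1 : ℕ) * ((Acts.card : ℝ) * Δ^2) := by push_cast; ring
  -- conclude
  obtain ⟨a0, ha0, ha0eq⟩ := Finset.exists_mem_eq_sup' hA fun a => R T a
  have hb1 : R T a0 ≤ Real.sqrt ((T : ℝ) * ((Acts.card : ℝ) * Δ^2)) := by
    have h1 : (max 0 (R T a0))^2 ≤ (T : ℝ) * ((Acts.card : ℝ) * Δ^2) :=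
      le_trans (Finset.single_le_sum (fun a _ => sq_nonneg (max 0 (R T a))) ha0) (hΦ T)
    calc R T a0 ≤ max 0 (R T a0) := le_max_right _ _
      _ ≤ Real.sqrt ((T : ℝ) * ((Acts.card : ℝ) * Δ^2)) := by
          rw [← Real.sqrt_sq (le_max_left 0 (R T a0))]
          exact Real.sqrt_le_sqrt h1
  have hsq : Real.sqrt ((T : ℝ) * ((Acts.card : ℝ) * Δ^2))
      = Real.sqrt T * Real.sqrt (Acts.card) * Δ := by
    rw [Real.sqrt_mul (by positivity), Real.sqrt_mul (by positivity),
      Real.sqrt_sq hΔ]; ring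
  have hTpos : (0 : ℝ) < T := by exact_mod_cast hT
  have hsT : Real.sqrt T > 0 := Real.sqrt_pos.mpr hTpos
  have key : Δ * Real.sqrt (Acts.card) * Real.sqrt T / T
      = Δ * Real.sqrt (Acts.card) / Real.sqrt T := by
    rw [show (T : ℝ) = Real.sqrt T * Real.sqrt T from (Real.mul_self_sqrt hTpos.le).symm]
    field_simp
    rw [Real.sqrt_sq (Real.sqrt_nonneg _)]
  have hb2 : R T a0 ≤ Δ * Real.sqrt (Acts.card) * Real.sqrt T := by
    rw [hsq] at hb1; linarith [hb1, mul_comm (Real.sqrt T * Real.sqrt (Acts.card)) Δ]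
  rw [ha0eq]
  calc (1 / (T : ℝ)) * R T a0 ≤ (1 / (T : ℝ)) * (Δ * Real.sqrt (Acts.card) * Real.sqrt T) :=
        mul_le_mul_of_nonneg_left hb2 (by positivity)
    _ = Δ * Real.sqrt (Acts.card) * Real.sqrt T / T := by ring
    _ = _ := key
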